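/- For every natural number n ≥ 1, 2·(2n)!/π^{2n} · 1/(2^{2n} − 1) < B_{2n} < 2·(2n)!/π^{2n} · 1/(2^{2n} − 2), where B_{2n} denotes the absolute value of the 2n-th Bernoulli number. -/

import Mathlib

open Real

private lemma daniello_telescope :
    HasSum (fun k : ℕ => 1 / (((k : ℝ) + 3) * ((k : ℝ) + 4))) (1 / 3) := by
  have hterm : ∀ k : ℕ, 1 / (((k : ℝ) + 3) * ((k : ℝ) + 4))
      = 1 / ((k : ℝ) + 3) - 1 / ((k : ℝ) + 4) := by
    intro k
    have h3 : ((k : ℝ) + 3) ≠ 0 := by positivity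
    have h4 : ((k : ℝ) + 4) ≠ 0 := by positivity
    field_simp
    ring
  rw [hasSum_iff_tendsto_nat_of_nonneg (fun i => by positivity)]
  have hsum : ∀ N : ℕ, ∑ k ∈ Finset.range N, 1 / (((k : ℝ) + 3) * ((k : ℝ) + 4))
      = 1 / 3 - 1 / ((N : ℝ) + 3) := by
    intro N
    induction N with
    | zero => norm_num
    | succ m ih =>
        rw [Finset.sum_range_succ, ih, hterm m]
        push_cast
        ring
  simp only [hsum]
  have h0 : Filter.Tendsto (fun N : ℕ => 1 / ((N : ℝ) + 3)) Filter.atTop (nhds 0) := by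
    have h1 : Filter.Tendsto (fun N : ℕ => 1 / ((N + 3 : ℕ) : ℝ)) Filter.atTop (nhds 0) :=
      (Filter.tendsto_add_atTop_iff_nat 3).2 tendsto_one_div_atTop_nhds_zero_nat
    simpa using h1
  have := Filter.Tendsto.const_sub (1 / 3 : ℝ) h0
  simpa using this

set_option maxHeartbeats 1000000 in
theorem daniello_bernoulli (n : ℕ) (hn : 1 ≤ n) :
    2 * (Nat.factorial (2 * n) : ℝ) / π ^ (2 * n) * (1 / (2 ^ (2 * n) - 1)) <
      |((bernoulli (2 * n) : ℚ) : ℝ)| ∧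
    |((bernoulli (2 * n) : ℚ) : ℝ)| <
      2 * (Nat.factorial (2 * n) : ℝ) / π ^ (2 * n) * (1 / (2 ^ (2 * n) - 2)) := by
  have hn0 : n ≠ 0 := by omega
  set f : ℕ → ℝ := fun k => 1 / (k : ℝ) ^ (2 * n) with hf_def
  have hHS := hasSum_zeta_nat hn0
  have hf : Summable f := hHS.summable
  set Z : ℝ := ∑' k, f k with hZ_def
  have hZeq : Z = (-1 : ℝ) ^ (n + 1) * (2 : ℝ) ^ (2 * n - 1) * π ^ (2 * n) *
      ((bernoulli (2 * n) : ℚ) : ℝ) / ((2 * n).factorial : ℝ) := hHS.tsum_eq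
  set B : ℝ := ((bernoulli (2 * n) : ℚ) : ℝ) with hB_def
  -- abbreviations for powers
  set A : ℝ := (2 : ℝ) ^ (2 * n) with hA_def
  have hA4 : (4 : ℝ) ≤ A := by
    rw [hA_def]
    calc (4 : ℝ) = 2 ^ 2 := by norm_num
    _ ≤ 2 ^ (2 * n) := by
        apply pow_le_pow_right₀ (by norm_num)
        omega
  have hApos : (0 : ℝ) < A := by linarith
  have hB3 : (3 : ℝ) ^ (2 * n) ≥ (9 / 4) * A := by
    rw [hA_def]
    have h1 : (3 : ℝ) ^ (2 * n) = (3 / 2) ^ (2 * n) * 2 ^ (2 * n) := by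
      rw [← mul_pow]; norm_num
    have h2 : ((3 : ℝ) / 2) ^ (2 * n) ≥ (3 / 2) ^ 2 := by
      apply pow_le_pow_right₀ (by norm_num)
      omega
    have h3 : (0 : ℝ) < 2 ^ (2 * n) := by positivity
    rw [h1]
    nlinarith
  have hB3pos : (0 : ℝ) < (3 : ℝ) ^ (2 * n) := by positivity
  have hCA : (4 : ℝ) ^ (2 * n) = A ^ 2 := by
    rw [hA_def, show (4 : ℝ) = 2 ^ 2 by norm_num, ← pow_mul, ← pow_mul,
      mul_comm 2 (2 * n)]
  have hB3C : (3 : ℝ) ^ (2 * n) < (4 : ℝ) ^ (2 * n) := by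
    apply pow_lt_pow_left₀ (by norm_num) (by norm_num)
    omega
  -- lower bound on Z
  have hZlow : A / (A - 1) < Z := by
    have hpart : ∑ k ∈ Finset.range 5, f k ≤ Z := by
      apply Summable.sum_le_tsum _ (fun i _ => by positivity) hf
    have hval : ∑ k ∈ Finset.range 5, f k
        = 1 + 1 / A + 1 / (3 : ℝ) ^ (2 * n) + 1 / (4 : ℝ) ^ (2 * n) := by
      rw [Finset.sum_range_succ, Finset.sum_range_succ, Finset.sum_range_succ,
        Finset.sum_range_succ, Finset.sum_range_one]
      simp only [hf_def]
      push_cast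
      rw [zero_pow (by omega : 2 * n ≠ 0)]
      norm_num [hA_def]
    -- arithmetic: A/(A-1) < 1 + 1/A + 1/3^s + 1/4^s
    have harith : A / (A - 1) < 1 + 1 / A + 1 / (3 : ℝ) ^ (2 * n) + 1 / (4 : ℝ) ^ (2 * n) := by
      have hC2 : (0 : ℝ) < (4 : ℝ) ^ (2 * n) := by positivity
      have h1 : 1 / (4 : ℝ) ^ (2 * n) < 1 / (3 : ℝ) ^ (2 * n) :=
        one_div_lt_one_div_of_lt hB3pos hB3C
      have h2 : 1 / (A - 1) < 1 / A + 2 / A ^ 2 := by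
        rw [div_add_div _ _ (by positivity) (by positivity),
          div_lt_div_iff₀ (by linarith) (by positivity)]
        nlinarith
      have hne : A - 1 ≠ 0 := by linarith
      have h3 : A / (A - 1) = 1 + 1 / (A - 1) := by
        field_simp
        ring
      rw [h3, hCA]
      have h4 : 1 / (3:ℝ) ^ (2*n) + 1 / A ^ 2 > 2 / A ^ 2 := by
        rw [hCA] at h1
        have : 2 / A ^ 2 = 1 / A ^ 2 + 1 / A ^ 2 := by ring
        linarith
      linarith
    linarith [hval ▸ hpart]
  have hZpos : 0 < Z := lt_trans (div_pos hApos (by linarith)) hZlow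
  -- upper bound on Z
  have hZhigh : Z < A / (A - 2) := by
    have hsplit : ∑ k ∈ Finset.range 4, f k + ∑' k, f (k + 4) = Z :=
      hf.sum_add_tsum_nat_add 4
    have hg : HasSum (fun k : ℕ => (16 / (4 : ℝ) ^ (2 * n)) *
        (1 / (((k : ℝ) + 3) * ((k : ℝ) + 4)))) ((16 / (4 : ℝ) ^ (2 * n)) * (1 / 3)) :=
      daniello_telescope.mul_left _
    have htail : ∑' k, f (k + 4) ≤ (16 / (4 : ℝ) ^ (2 * n)) * (1 / 3) := by
      rw [← hg.tsum_eq]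
      refine Summable.tsum_le_tsum (fun k => ?_) ((summable_nat_add_iff 4).mpr hf) hg.summable
      -- 1/(k+4)^(2n) ≤ 16/4^(2n) * 1/((k+3)(k+4))
      have hx : (0 : ℝ) < (k : ℝ) + 4 := by positivity
      have hx3 : (0 : ℝ) < (k : ℝ) + 3 := by positivity
      have hp : ((k : ℝ) + 4) ^ (2 * n) = ((k : ℝ) + 4) ^ 2 * ((k : ℝ) + 4) ^ (2 * n - 2) := by
        rw [← pow_add]
        congr 1
        omega
      have hge : (4 : ℝ) ^ (2 * n - 2) ≤ ((k : ℝ) + 4) ^ (2 * n - 2) := by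
        apply pow_le_pow_left₀ (by norm_num) (by linarith)
      have h4p : (4 : ℝ) ^ (2 * n) = 16 * (4 : ℝ) ^ (2 * n - 2) := by
        rw [show (16 : ℝ) = 4 ^ 2 by norm_num, ← pow_add]
        congr 1
        omega
      simp only [hf_def]
      push_cast
      have e : 16 / (4 : ℝ) ^ (2 * n) * (1 / (((k : ℝ) + 3) * ((k : ℝ) + 4)))
          = 16 / ((4 : ℝ) ^ (2 * n) * (((k : ℝ) + 3) * ((k : ℝ) + 4))) := by
        rw [div_mul_div_comm, mul_one]
      rw [e, div_le_div_iff₀ (by positivity) (by positivity), hp, h4p]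
      have hkk : ((k : ℝ) + 3) * ((k : ℝ) + 4) ≤ ((k : ℝ) + 4) ^ 2 := by nlinarith
      have h4pos : (0 : ℝ) < (4 : ℝ) ^ (2 * n - 2) := by positivity
      nlinarith [mul_le_mul_of_nonneg_left hge (le_of_lt (mul_pos hx3 hx)),
        mul_le_mul_of_nonneg_right hkk (le_of_lt h4pos)]
    have hhead : ∑ k ∈ Finset.range 4, f k = 1 + 1 / A + 1 / (3 : ℝ) ^ (2 * n) := by
      rw [Finset.sum_range_succ, Finset.sum_range_succ, Finset.sum_range_succ,
        Finset.sum_range_one]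
      simp only [hf_def]
      push_cast
      rw [zero_pow (by omega : 2 * n ≠ 0)]
      norm_num [hA_def]
    have harith : 1 + 1 / A + 1 / (3 : ℝ) ^ (2 * n) + (16 / (4 : ℝ) ^ (2 * n)) * (1 / 3)
        < A / (A - 2) := by
      have h1 : 1 / (3 : ℝ) ^ (2 * n) ≤ (4 / 9) / A := by
        rw [div_le_div_iff₀ hB3pos hApos]
        nlinarith
      have h2 : (16 / (4 : ℝ) ^ (2 * n)) * (1 / 3) = 16 / (3 * A ^ 2) := by
        rw [hCA]; ring
      rw [h2]
      have key : 1 + 1 / A + (4 / 9) / A + 16 / (3 * A ^ 2) < A / (A - 2) := by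
        have hAne : A ≠ 0 := ne_of_gt hApos
        have e2 : 1 + 1 / A + (4 / 9) / A + 16 / (3 * A ^ 2)
            = (9 * A ^ 2 + 13 * A + 48) / (9 * A ^ 2) := by
          field_simp
          ring
        rw [e2, div_lt_div_iff₀ (by positivity) (by linarith)]
        nlinarith [sq_nonneg (A - 4), mul_pos hApos hApos]
      linarith
    calc Z = ∑ k ∈ Finset.range 4, f k + ∑' k, f (k + 4) := hsplit.symm
      _ ≤ 1 + 1 / A + 1 / (3 : ℝ) ^ (2 * n) + (16 / (4 : ℝ) ^ (2 * n)) * (1 / 3) := by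
          rw [hhead]; linarith
      _ < A / (A - 2) := harith
  -- sign of B
  have hfact : (0 : ℝ) < (((2 * n).factorial : ℝ) : ℝ) := by positivity
  have hppos : (0 : ℝ) < π ^ (2 * n) := by positivity
  have hhalf : (2 : ℝ) ^ (2 * n - 1) = A / 2 := by
    rw [hA_def, eq_div_iff (by norm_num : (2:ℝ) ≠ 0), ← pow_succ]
    congr 1
    omega
  have hCpos : (0 : ℝ) < (2 : ℝ) ^ (2 * n - 1) * π ^ (2 * n) / ((2 * n).factorial : ℝ) := by positivity
  have hZeq' : Z = ((-1 : ℝ) ^ (n + 1) * B) * ((2 : ℝ) ^ (2 * n - 1) * π ^ (2 * n) / ((2 * n).factorial : ℝ)) := by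
    rw [hZeq]; ring
  have hsign : 0 < (-1 : ℝ) ^ (n + 1) * B := by
    by_contra hcon
    push_neg at hcon
    nlinarith [hZpos, hZeq']
  have habs : |B| = (-1 : ℝ) ^ (n + 1) * B := by
    rcases Nat.even_or_odd (n + 1) with h | h
    · rw [h.neg_one_pow] at hsign ⊢
      rw [one_mul] at hsign ⊢
      exact abs_of_pos hsign
    · rw [h.neg_one_pow] at hsign ⊢
      rw [neg_one_mul] at hsign ⊢
      exact abs_of_neg (by linarith)
  have hBabs : |B| = Z / ((2 : ℝ) ^ (2 * n - 1) * π ^ (2 * n) / ((2 * n).factorial : ℝ)) := by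
    rw [habs, hZeq']
    field_simp
  have hBval : |B| = 2 * (((2 * n).factorial : ℝ) : ℝ) / π ^ (2 * n) * (Z / A) := by
    rw [hBabs, hhalf]
    field_simp
  constructor
  · rw [hBval]
    apply mul_lt_mul_of_pos_left _ (by positivity)
    rw [div_lt_div_iff₀ (by linarith : (0:ℝ) < A - 1) hApos]
    rw [div_lt_iff₀ (by linarith : (0:ℝ) < A - 1)] at hZlow
    linarith
  · rw [hBval]
    apply mul_lt_mul_of_pos_left _ (by positivity)
    rw [div_lt_div_iff₀ hApos (by linarith : (0:ℝ) < A - 2)]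
    rw [lt_div_iff₀ (by linarith : (0:ℝ) < A - 2)] at hZhigh
    linarith
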